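/- Let G and G' be graphs. There exists a graph H with vertex set V(G) ∪ V(G') and a well-behaved RSP-relation R on E(H) with exactly two classes φ = E(G) ∪ E(G') and φ̄ (the edges joining V(G) to V(G')), such that every vertex of V(G) is incident to exactly one φ̄-edge, if and only if G is a covering graph of G'. -/

import Mathlib

open SimpleGraph

variable {V : Type*}

/-- An equivalence relation on a set `E` of edges: reflexive on `E`, symmetric, transitive,
and only relating elements of `E`. -/
structure IsEquivOn (R : Sym2 V → Sym2 V → Prop) (E : Set (Sym2 V)) : Prop where
  refl : ∀ e ∈ E, R e e
  symm : ∀ {e f}, R e f → R f e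
  trans : ∀ {e f g}, R e f → R f g → R e g
  mem_left : ∀ {e f}, R e f → e ∈ E
  mem_right : ∀ {e f}, R e f → f ∈ E

/-- `R` is an RSP-relation on `G`: an equivalence relation on `E(G)` such that any two adjacent
edges in distinct classes span a square (4-cycle) with opposite edges in the same class. -/
def IsRSP (G : SimpleGraph V) (R : Sym2 V → Sym2 V → Prop) : Prop :=
  IsEquivOn R G.edgeSet ∧
  ∀ x y z : V, G.Adj x y → G.Adj x z → y ≠ z → ¬ R s(x, y) s(x, z) →
    ∃ w : V, w ≠ x ∧ w ≠ y ∧ w ≠ z ∧ G.Adj y w ∧ G.Adj z w ∧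
      R s(x, y) s(z, w) ∧ R s(x, z) s(y, w)

/-- A finest RSP-relation: an RSP-relation such that every finer RSP-relation coincides
with it. -/
def IsFinestRSP (G : SimpleGraph V) (R : Sym2 V → Sym2 V → Prop) : Prop :=
  IsRSP G R ∧ ∀ S : Sym2 V → Sym2 V → Prop, IsRSP G S →
    (∀ e f, S e f → R e f) → (∀ e f, R e f → S e f)

/-- `R` is well-behaved on `G`: no `K_{2,3}`-subgraph of `G` (canonical bipartition
`{x,y}, {a,b,c}`) has a forbidden coloring, i.e., edges `[a,x], [x,c], [y,b]` in one class
and the remaining three edges outside that class. -/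
def WellBehaved (G : SimpleGraph V) (R : Sym2 V → Sym2 V → Prop) : Prop :=
  ¬ ∃ x y a b c : V, x ≠ y ∧ a ≠ b ∧ a ≠ c ∧ b ≠ c ∧
    G.Adj x a ∧ G.Adj x b ∧ G.Adj x c ∧ G.Adj y a ∧ G.Adj y b ∧ G.Adj y c ∧
    R s(a, x) s(x, c) ∧ R s(a, x) s(y, b) ∧
    ¬ R s(a, x) s(x, b) ∧ ¬ R s(a, x) s(a, y) ∧ ¬ R s(a, x) s(c, y)

/-- An edge of a graph on `V1 ⊕ V2` is "pure" if both endpoints lie on the same side. -/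
def pureEdge {V1 V2 : Type*} (e : Sym2 (V1 ⊕ V2)) : Prop :=
  (∃ u u' : V1, e = s(Sum.inl u, Sum.inl u')) ∨ (∃ v v' : V2, e = s(Sum.inr v, Sum.inr v'))

/-- The two-class relation on the edges of a graph `H` on `V1 ⊕ V2`: the class of pure
edges and the class of connecting edges. -/
def crossRel {V1 V2 : Type*} (H : SimpleGraph (V1 ⊕ V2))
    (e f : Sym2 (V1 ⊕ V2)) : Prop :=
  e ∈ H.edgeSet ∧ f ∈ H.edgeSet ∧ (pureEdge e ↔ pureEdge f)

section Aux
variable {V1 V2 : Type*}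

@[simp] lemma pure_ll (a b : V1) : pureEdge (s(Sum.inl a, Sum.inl b) : Sym2 (V1 ⊕ V2)) :=
  Or.inl ⟨a, b, rfl⟩

@[simp] lemma pure_rr (a b : V2) : pureEdge (s(Sum.inr a, Sum.inr b) : Sym2 (V1 ⊕ V2)) :=
  Or.inr ⟨a, b, rfl⟩

@[simp] lemma not_pure_lr (a : V1) (b : V2) :
    ¬ pureEdge (s(Sum.inl a, Sum.inr b) : Sym2 (V1 ⊕ V2)) := by
  rintro (⟨u, u', h⟩ | ⟨v, v', h⟩) <;> rw [Sym2.eq_iff] at h <;>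
    rcases h with ⟨h1, h2⟩ | ⟨h1, h2⟩ <;> simp_all

@[simp] lemma not_pure_rl (a : V2) (b : V1) :
    ¬ pureEdge (s(Sum.inr a, Sum.inl b) : Sym2 (V1 ⊕ V2)) := by
  rw [Sym2.eq_swap]; exact not_pure_lr b a

lemma pure_inl (a : V1) (w : V1 ⊕ V2) (h : pureEdge s(Sum.inl a, w)) :
    ∃ b, w = Sum.inl b := by
  cases w with
  | inl b => exact ⟨b, rfl⟩
  | inr b => exact absurd h (not_pure_lr a b)

lemma pure_inr (a : V2) (w : V1 ⊕ V2) (h : pureEdge s(Sum.inr a, w)) :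
    ∃ b, w = Sum.inr b := by
  cases w with
  | inl b => exact absurd h (not_pure_rl a b)
  | inr b => exact ⟨b, rfl⟩

def coverGraph (G : SimpleGraph V1) (G' : SimpleGraph V2) (f : V1 → V2) :
    SimpleGraph (V1 ⊕ V2) where
  Adj u v := match u, v with
    | .inl a, .inl b => G.Adj a b
    | .inr a, .inr b => G'.Adj a b
    | .inl a, .inr b => f a = b
    | .inr a, .inl b => f b = a
  symm := by
    constructor
    rintro (a | a) (b | b) h
    · exact G.adj_symm h
    · exact h
    · exact h
    · exact G'.adj_symm h
  loopless := by
    constructor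
    rintro (a | a) h
    · exact G.irrefl h
    · exact G'.irrefl h

end Aux

/-- There is a graph `H` on `V(G) ⊕ V(G')` restricting to `G` and `G'` on the two sides,
whose two-class relation (pure edges `φ = E(G) ∪ E(G')` vs. connecting edges `φ̄`) is a
well-behaved RSP-relation and in which every vertex of `V(G)` is incident to exactly one
connecting edge, if and only if `G` is a covering graph of `G'`. -/
theorem stmt16 {V V' : Type*} (G : SimpleGraph V) (G' : SimpleGraph V') :
    (∃ H : SimpleGraph (V ⊕ V'),
      (∀ a b, H.Adj (Sum.inl a) (Sum.inl b) ↔ G.Adj a b) ∧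
      (∀ a b, H.Adj (Sum.inr a) (Sum.inr b) ↔ G'.Adj a b) ∧
      IsRSP H (crossRel H) ∧ WellBehaved H (crossRel H) ∧
      (∀ a : V, ∃! b : V', H.Adj (Sum.inl a) (Sum.inr b))) ↔
    (∃ f : V → V', (∀ a b, G.Adj a b → G'.Adj (f a) (f b)) ∧
      ∀ a w, G'.Adj (f a) w → ∃! b, G.Adj a b ∧ f b = w) := by
  constructor
  · rintro ⟨H, hGl, hGr, ⟨hEq, hSq⟩, hWB, hUn⟩
    choose f hf hf' using hUn
    refine ⟨f, ?_, ?_⟩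
    · intro a b hab
      have h1 : H.Adj (Sum.inl a) (Sum.inl b) := (hGl a b).2 hab
      have hne : (Sum.inl b : V ⊕ V') ≠ Sum.inr (f a) := by simp
      have hnR : ¬ crossRel H s(Sum.inl a, Sum.inl b) s(Sum.inl a, Sum.inr (f a)) :=
        fun h => not_pure_lr a (f a) (h.2.2.1 (pure_ll a b))
      obtain ⟨w, hwx, hwy, hwz, hyw, hzw, hR1, hR2⟩ := hSq _ _ _ h1 (hf a) hne hnR
      obtain ⟨d, rfl⟩ := pure_inr (f a) w (hR1.2.2.1 (pure_ll a b))
      have hd : d = f b := hf' b d hyw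
      rw [hd] at hzw
      exact (hGr _ _).1 hzw
    · intro a w' hw
      have hxy : H.Adj (Sum.inr (f a)) (Sum.inr w') := (hGr _ _).2 hw
      have hxz : H.Adj (Sum.inr (f a)) (Sum.inl a) := (hf a).symm
      have hne : (Sum.inr w' : V ⊕ V') ≠ Sum.inl a := by simp
      have hnR : ¬ crossRel H s(Sum.inr (f a), Sum.inr w') s(Sum.inr (f a), Sum.inl a) :=
        fun h => not_pure_rl (f a) a (h.2.2.1 (pure_rr (f a) w'))
      obtain ⟨w, hwx, hwy, hwz, hyw, hzw, hR1, hR2⟩ := hSq _ _ _ hxy hxz hne hnR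
      obtain ⟨b, rfl⟩ := pure_inl a w (hR1.2.2.1 (pure_rr (f a) w'))
      have hab : G.Adj a b := (hGl _ _).1 hzw
      have hfb : f b = w' := (hf' b w' hyw.symm).symm
      refine ⟨b, ⟨hab, hfb⟩, ?_⟩
      rintro b2 ⟨hab2, hfb2⟩
      by_contra hbb
      refine hWB ⟨Sum.inl a, Sum.inr w', Sum.inl b2, Sum.inr (f a), Sum.inl b,
        by simp, by simp, by simpa using hbb, by simp,
        (hGl _ _).2 hab2, hf a, (hGl _ _).2 hab,
        ?_, (hGr _ _).2 hw.symm, ?_, ?_, ?_, ?_, ?_, ?_⟩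
      · have := hf b2; rw [hfb2] at this; exact this.symm
      · have := hf b; rw [hfb] at this; exact this.symm
      · exact ⟨H.mem_edgeSet.2 ((hGl _ _).2 hab2.symm),
          H.mem_edgeSet.2 ((hGl _ _).2 hab),
          iff_of_true (pure_ll _ _) (pure_ll _ _)⟩
      · refine ⟨H.mem_edgeSet.2 ((hGl _ _).2 hab2.symm),
          H.mem_edgeSet.2 ((hGr _ _).2 hw.symm),
          iff_of_true (pure_ll _ _) (pure_rr _ _)⟩
      · exact fun h => not_pure_lr a (f a) (h.2.2.1 (pure_ll _ _))
      · exact fun h => not_pure_lr b2 w' (h.2.2.1 (pure_ll _ _))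
      · exact fun h => not_pure_lr b w' (h.2.2.1 (pure_ll _ _))
  · rintro ⟨f, hmap, hlift⟩
    refine ⟨coverGraph G G' f, fun a b => Iff.rfl, fun a b => Iff.rfl,
      ⟨⟨fun e he => ⟨he, he, Iff.rfl⟩,
        fun h => ⟨h.2.1, h.1, h.2.2.symm⟩,
        fun h h' => ⟨h.1, h'.2.1, h.2.2.trans h'.2.2⟩,
        fun h => h.1, fun h => h.2.1⟩, ?_⟩, ?_,
      fun a => ⟨f a, rfl, fun y hy => (show f a = y from hy).symm⟩⟩
    · -- RSP square condition
      set H := coverGraph G G' f with hH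
      intro x y z hxy hxz hyz hnR
      have hpp : ¬ (pureEdge s(x, y) ↔ pureEdge s(x, z)) :=
        fun h => hnR ⟨H.mem_edgeSet.2 hxy, H.mem_edgeSet.2 hxz, h⟩
      obtain (a | a) := x <;> obtain (b | b) := y <;> obtain (c | c) := z
      · exact absurd (iff_of_true (pure_ll a b) (pure_ll a c)) hpp
      · -- x = inl a, y = inl b, z = inr c
        have hc : f a = c := hxz
        have hab : G.Adj a b := hxy
        have h' : G'.Adj (f a) (f b) := hmap a b hab
        subst hc
        refine ⟨Sum.inr (f b), by simp, by simp, by simpa using h'.ne',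
          rfl, h', ?_, ?_⟩
        · exact ⟨H.mem_edgeSet.2 hxy, H.mem_edgeSet.2 (show H.Adj _ _ from h'),
            iff_of_true (pure_ll _ _) (pure_rr _ _)⟩
        · exact ⟨H.mem_edgeSet.2 hxz, H.mem_edgeSet.2 (show H.Adj _ _ from rfl),
            iff_of_false (not_pure_lr _ _) (not_pure_lr _ _)⟩
      · -- x = inl a, y = inr b, z = inl c
        have hb : f a = b := hxy
        have hac : G.Adj a c := hxz
        have h' : G'.Adj (f a) (f c) := hmap a c hac
        subst hb
        refine ⟨Sum.inr (f c), by simp, by simpa using h'.ne', by simp,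
          h', rfl, ?_, ?_⟩
        · exact ⟨H.mem_edgeSet.2 hxy, H.mem_edgeSet.2 (show H.Adj _ _ from rfl),
            iff_of_false (not_pure_lr _ _) (not_pure_lr _ _)⟩
        · exact ⟨H.mem_edgeSet.2 hxz, H.mem_edgeSet.2 (show H.Adj _ _ from h'),
            iff_of_true (pure_ll _ _) (pure_rr _ _)⟩
      · -- x = inl a, y = inr b, z = inr c
        have hb : f a = b := hxy
        have hc : f a = c := hxz
        subst hb; subst hc
        exact absurd rfl hyz
      · -- x = inr a, y = inl b, z = inl c
        exact absurd (iff_of_false (not_pure_rl a b) (not_pure_rl a c)) hpp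
      · -- x = inr a, y = inl b, z = inr c
        have hb : f b = a := hxy
        have hac : G'.Adj a c := hxz
        subst hb
        obtain ⟨d, ⟨hbd, hfd⟩, -⟩ := hlift b c hac
        refine ⟨Sum.inl d, by simp, by simpa using hbd.ne', by simp,
          hbd, hfd, ?_, ?_⟩
        · exact ⟨H.mem_edgeSet.2 hxy, H.mem_edgeSet.2 (show H.Adj _ _ from hfd),
            iff_of_false (not_pure_rl _ _) (not_pure_rl _ _)⟩
        · exact ⟨H.mem_edgeSet.2 hxz, H.mem_edgeSet.2 (show H.Adj _ _ from hbd),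
            iff_of_true (pure_rr _ _) (pure_ll _ _)⟩
      · -- x = inr a, y = inr b, z = inl c
        have hc : f c = a := hxz
        have hab' : G'.Adj a b := hxy
        subst hc
        obtain ⟨d, ⟨hcd, hfd⟩, -⟩ := hlift c b hab'
        refine ⟨Sum.inl d, by simp, by simp, by simpa using hcd.ne',
          hfd, hcd, ?_, ?_⟩
        · exact ⟨H.mem_edgeSet.2 hxy, H.mem_edgeSet.2 (show H.Adj _ _ from hcd),
            iff_of_true (pure_rr _ _) (pure_ll _ _)⟩
        · exact ⟨H.mem_edgeSet.2 hxz, H.mem_edgeSet.2 (show H.Adj _ _ from hfd),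
            iff_of_false (not_pure_rl _ _) (not_pure_rl _ _)⟩
      · exact absurd (iff_of_true (pure_rr a b) (pure_rr a c)) hpp
    · -- WellBehaved
      set H := coverGraph G G' f with hH
      rintro ⟨x, y, a, b, c, hxy, hab, hac, hbc, hxa, hxb, hxc, hya, hyb, hyc,
        hR1, hR2, hn1, hn2, hn3⟩
      have h1 := hR1.2.2
      have h2 := hR2.2.2
      have h3 : ¬ (pureEdge s(a, x) ↔ pureEdge s(x, b)) :=
        fun h => hn1 ⟨H.mem_edgeSet.2 hxa.symm, H.mem_edgeSet.2 hxb, h⟩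
      have h4 : ¬ (pureEdge s(a, x) ↔ pureEdge s(a, y)) :=
        fun h => hn2 ⟨H.mem_edgeSet.2 hxa.symm, H.mem_edgeSet.2 hya.symm, h⟩
      have h5 : ¬ (pureEdge s(a, x) ↔ pureEdge s(c, y)) :=
        fun h => hn3 ⟨H.mem_edgeSet.2 hxa.symm, H.mem_edgeSet.2 hyc.symm, h⟩
      obtain (u | u) := x <;> obtain (v | v) := y <;> obtain (a' | a') := a <;>
        obtain (b' | b') := b <;> obtain (c' | c') := c <;>
        simp only [pure_ll, pure_rr, not_pure_lr, not_pure_rl, iff_true, true_iff,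
          iff_false, false_iff, not_true, not_false_iff, not_not] at h1 h2 h3 h4 h5
      -- case (i): x = inl u, y = inr v, a = inl a', b = inr b', c = inl c'
      · have hfa : f a' = v := hya
        have hfc : f c' = v := hyc
        have hfu : f u = b' := hxb
        have hadj : G'.Adj (f u) v := by rw [hfu]; exact (hyb : G'.Adj v b').symm
        obtain ⟨d, -, hd⟩ := hlift u v hadj
        have e1 : a' = d := hd a' ⟨hxa, hfa⟩
        have e2 : c' = d := hd c' ⟨hxc, hfc⟩
        exact hac (by rw [e1, e2])
      · -- x = inl u, y = inr v, a = inr a', b = inl b', c = inr c'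
        have hfa : f u = a' := hxa
        have hfc : f u = c' := hxc
        exact hac (by rw [← hfa, ← hfc])
      · -- x = inr u, y = inl v, a = inl a', b = inr b', c = inl c'
        have hfa : f a' = u := hxa
        have hfc : f c' = u := hxc
        have hfv : f v = b' := hyb
        have hadj : G'.Adj (f v) u := by rw [hfv]; exact (hxb : G'.Adj u b').symm
        obtain ⟨d, -, hd⟩ := hlift v u hadj
        have e1 : a' = d := hd a' ⟨hya, hfa⟩
        have e2 : c' = d := hd c' ⟨hyc, hfc⟩
        exact hac (by rw [e1, e2])
      · -- x = inr u, y = inl v, a = inr a', b = inl b', c = inr c'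
        have hfa : f v = a' := hya
        have hfc : f v = c' := hyc
        exact hac (by rw [← hfa, ← hfc])
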